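/- For n ≥ k and any k×k permutation matrix P, every n×n strongly P-forcing matrix has at least (k−1) 0-entries in each row, hence M(n, P) ≤ n² − (k−1)n. -/

import Mathlib

open Finset

/-- Number of 1-entries of a (0,1)-matrix. -/
def onesCount {m n : ℕ} (A : Fin m → Fin n → Bool) : ℕ :=
  (Finset.univ.filter (fun p : Fin m × Fin n => A p.1 p.2 = true)).card

/-- Number of 0-entries of a (0,1)-matrix. -/
def zerosCount {m n : ℕ} (A : Fin m → Fin n → Bool) : ℕ :=
  (Finset.univ.filter (fun p : Fin m × Fin n => A p.1 p.2 = false)).card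

/-- `A` is `Q`-forcing: every s×t submatrix of `A` is entrywise ≥ Q. -/
def IsForcing {m n s t : ℕ} (A : Fin m → Fin n → Bool) (Q : Fin s → Fin t → Bool) : Prop :=
  ∀ (r : Fin s → Fin m) (c : Fin t → Fin n), StrictMono r → StrictMono c →
    ∀ y x, Q y x = true → A (r y) (c x) = true

/-- Minimum number of 1-entries of an m×n Q-forcing matrix. -/
noncomputable def mMin (m n : ℕ) {s t : ℕ} (Q : Fin s → Fin t → Bool) : ℕ :=
  sInf {v | ∃ A : Fin m → Fin n → Bool, IsForcing A Q ∧ onesCount A = v}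

/-- `A` is strongly `Q`-forcing: every 1-entry lies in a submatrix exactly equal to `Q`. -/
def IsStronglyForcing {m n s t : ℕ} (A : Fin m → Fin n → Bool)
    (Q : Fin s → Fin t → Bool) : Prop :=
  ∀ i j, A i j = true → ∃ (r : Fin s → Fin m) (c : Fin t → Fin n),
    StrictMono r ∧ StrictMono c ∧ (∀ y x, A (r y) (c x) = Q y x) ∧
    ∃ y x, r y = i ∧ c x = j

/-- Maximum number of 1-entries of an m×n strongly Q-forcing matrix. -/
noncomputable def MMax (m n : ℕ) {s t : ℕ} (Q : Fin s → Fin t → Bool) : ℕ :=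
  sSup {v | ∃ A : Fin m → Fin n → Bool, IsStronglyForcing A Q ∧ onesCount A = v}

/-- Corner sets of 0-positions with no 1-entry weakly in the given quadrant direction. -/
def cornerNW {s t : ℕ} (Q : Fin s → Fin t → Bool) : Finset (Fin s × Fin t) :=
  Finset.univ.filter (fun p => ∀ i' j', i' ≤ p.1 → j' ≤ p.2 → Q i' j' = false)

def cornerNE {s t : ℕ} (Q : Fin s → Fin t → Bool) : Finset (Fin s × Fin t) :=
  Finset.univ.filter (fun p => ∀ i' j', i' ≤ p.1 → p.2 ≤ j' → Q i' j' = false)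

def cornerSW {s t : ℕ} (Q : Fin s → Fin t → Bool) : Finset (Fin s × Fin t) :=
  Finset.univ.filter (fun p => ∀ i' j', p.1 ≤ i' → j' ≤ p.2 → Q i' j' = false)

def cornerSE {s t : ℕ} (Q : Fin s → Fin t → Bool) : Finset (Fin s × Fin t) :=
  Finset.univ.filter (fun p => ∀ i' j', p.1 ≤ i' → p.2 ≤ j' → Q i' j' = false)

/-- `P` is a permutation matrix. -/
def IsPermMatrix {k : ℕ} (P : Fin k → Fin k → Bool) : Prop :=
  ∃ σ : Equiv.Perm (Fin k), ∀ i j, P i j = decide (σ i = j)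

theorem stmt19 (k n : ℕ) (hn : k ≤ n) (P : Fin k → Fin k → Bool) (hP : IsPermMatrix P) :
    (∀ A : Fin n → Fin n → Bool, IsStronglyForcing A P →
      ∀ i : Fin n, k - 1 ≤ (Finset.univ.filter (fun j => A i j = false)).card) ∧
    MMax n n P ≤ n ^ 2 - (k - 1) * n := by
  obtain ⟨σ, hσ⟩ := hP
  have key : ∀ A : Fin n → Fin n → Bool, IsStronglyForcing A P →
      ∀ i : Fin n, k - 1 ≤ (Finset.univ.filter (fun j => A i j = false)).card := by
    intro A hA i
    by_cases h : ∃ j, A i j = true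
    · obtain ⟨j, hj⟩ := h
      obtain ⟨r, c, hr, hc, heq, y, x, hy, hx⟩ := hA i j hj
      have hcard : (Finset.univ.filter (fun x' : Fin k => P y x' = false)).card = k - 1 := by
        have hset : (Finset.univ.filter (fun x' : Fin k => P y x' = false))
            = Finset.univ.erase (σ y) := by
          ext x'
          simp [hσ, Finset.mem_erase, eq_comm]
        rw [hset, Finset.card_erase_of_mem (Finset.mem_univ _), Finset.card_univ,
          Fintype.card_fin]
      calc k - 1 = _ := hcard.symm
        _ ≤ _ := by
          apply Finset.card_le_card_of_injOn c
          · intro x' hx'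
            simp only [Finset.mem_coe, Finset.mem_filter, Finset.mem_univ, true_and] at hx' ⊢
            rw [← hy, heq, hx']
          · intro a _ b _ hab
            exact hc.injective hab
    · push_neg at h
      have hall : (Finset.univ.filter (fun j => A i j = false)) = Finset.univ := by
        ext j
        simpa using h j
      rw [hall, Finset.card_univ, Fintype.card_fin]
      omega
  refine ⟨key, ?_⟩
  apply csSup_le'
  rintro v ⟨A, hA, rfl⟩
  have hrow : zerosCount A = ∑ i : Fin n, (Finset.univ.filter (fun j => A i j = false)).card := by
    rw [zerosCount, Finset.card_filter, Fintype.sum_prod_type]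
    simp only [Finset.card_filter]
  have hz : (k - 1) * n ≤ zerosCount A := by
    rw [hrow]
    calc (k - 1) * n = ∑ _i : Fin n, (k - 1) := by simp [mul_comm]
      _ ≤ _ := Finset.sum_le_sum fun i _ => key A hA i
  have hsum : onesCount A + zerosCount A = n ^ 2 := by
    have h1 : (Finset.univ.filter (fun p : Fin n × Fin n => A p.1 p.2 = true)).card
        + (Finset.univ.filter (fun p : Fin n × Fin n => ¬ A p.1 p.2 = true)).card
        = (Finset.univ : Finset (Fin n × Fin n)).card :=
      Finset.card_filter_add_card_filter_not _
    have h2 : (Finset.univ.filter (fun p : Fin n × Fin n => ¬ A p.1 p.2 = true))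
        = (Finset.univ.filter (fun p : Fin n × Fin n => A p.1 p.2 = false)) := by
      simp [Bool.not_eq_true]
    rw [h2] at h1
    simpa [onesCount, zerosCount, Finset.card_univ, sq] using h1
  omega
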